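/- Strong duality for the inner convex problem of RatioDCA: Let m ≥ 1, let w : {1,…,m} × {1,…,m} → ℝ be symmetric with w(i,j) ≥ 0, let c ∈ ℝ^m, λ ≥ 0, σ ≥ 0. Then min over u ∈ ℝ^m with u ≥ 0 of [ (1/2)‖u‖₂² + ⟨u,c⟩ + σ·max_i u_i + (λ/2)·∑_{i,j} w(i,j)·|u_i − u_j| ] equals max over pairs (α, v), where α : {1,…,m}² → ℝ is antisymmetric (α(i,j) = −α(j,i)) with |α(i,j)| ≤ 1 for all i,j, and v ∈ ℝ^m with v_i ≥ 0 and ∑_i v_i = 1, of −(1/2)·‖P₊(−c − (λ/2)·Aα − σ·v)‖₂², where (Aα)_i := ∑_j w(i,j)·(α(i,j) − α(j,i)) and P₊ : ℝ^m → ℝ^m is the componentwise positive part, (P₊(x))_i = max{x_i, 0}. -/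

import Mathlib

open Finset

private lemma smooth_aux (x s : ℝ) :
    -(1 / 2) * (max (-x) 0) ^ 2 + (max (-x) 0) * s - s ^ 2 / 2
      ≤ -(1 / 2) * (max (-(x + s)) 0) ^ 2 := by
  rcases le_or_gt (x + s) 0 with h1 | h1 <;> rcases le_or_gt x 0 with h2 | h2
  · rw [max_eq_left (by linarith), max_eq_left (by linarith)]; nlinarith
  · rw [max_eq_right (show -x ≤ 0 by linarith), max_eq_left (show (0:ℝ) ≤ -(x+s) by linarith)]
    nlinarith
  · rw [max_eq_left (show (0:ℝ) ≤ -x by linarith), max_eq_right (show -(x+s) ≤ 0 by linarith)]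
    nlinarith [sq_nonneg (x+s)]
  · rw [max_eq_right (show -x ≤ 0 by linarith), max_eq_right (show -(x+s) ≤ 0 by linarith)]
    nlinarith

private lemma weak_aux (u b : ℝ) (hu : 0 ≤ u) :
    -(1 / 2) * (max (-b) 0) ^ 2 ≤ (1 / 2) * u ^ 2 + u * b := by
  rcases le_or_gt b 0 with h | h
  · rw [max_eq_left (show (0:ℝ) ≤ -b by linarith)]; nlinarith [sq_nonneg (u + b)]
  · rw [max_eq_right (show -b ≤ 0 by linarith)]; nlinarith

private lemma eq_aux (b : ℝ) :
    (1 / 2) * (max (-b) 0) ^ 2 + (max (-b) 0) * b = -(1 / 2) * (max (-b) 0) ^ 2 := by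
  rcases le_or_gt b 0 with h | h
  · rw [max_eq_left (show (0:ℝ) ≤ -b by linarith)]; ring
  · rw [max_eq_right (show -b ≤ 0 by linarith)]; ring

private lemma sum_antisym_zero {m : ℕ} (F : Fin m → Fin m → ℝ) (hF : ∀ i j, F i j = -F j i) :
    ∑ i, ∑ j, F i j = 0 := by
  have h : ∑ i, ∑ j, F i j = -(∑ i, ∑ j, F i j) := by
    calc ∑ i, ∑ j, F i j = ∑ j, ∑ i, F i j := Finset.sum_comm
      _ = ∑ j, ∑ i, -(F j i) :=
          Finset.sum_congr rfl fun j _ => Finset.sum_congr rfl fun i _ => hF i j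
      _ = -(∑ j, ∑ i, F j i) := by simp
  linarith

private lemma rearrange {m : ℕ} (w : Fin m → Fin m → ℝ) (hw : ∀ i j, w i j = w j i)
    (α : Fin m → Fin m → ℝ) (hα : ∀ i j, α i j = -α j i) (u : Fin m → ℝ) :
    ∑ i, (∑ j, w i j * (α i j - α j i)) * u i
      = ∑ i, ∑ j, w i j * α i j * (u i - u j) := by
  have key : ∑ i, ∑ j, (w i j * (α i j - α j i) * u i - w i j * α i j * (u i - u j)) = 0 := by
    apply sum_antisym_zero
    intro i j
    rw [hw j i, hα j i]; ring
  have h1 : ∑ i, (∑ j, w i j * (α i j - α j i)) * u i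
      = ∑ i, ∑ j, w i j * (α i j - α j i) * u i :=
    Finset.sum_congr rfl fun i _ => by rw [Finset.sum_mul]
  have h2 : ∑ i, ∑ j, (w i j * (α i j - α j i) * u i - w i j * α i j * (u i - u j))
      = ∑ i, ∑ j, w i j * (α i j - α j i) * u i - ∑ i, ∑ j, w i j * α i j * (u i - u j) := by
    rw [← Finset.sum_sub_distrib]
    exact Finset.sum_congr rfl fun i _ => by rw [Finset.sum_sub_distrib]
  rw [h1]
  have := h2.symm.trans key
  linarith

section RatioAux

variable {m : ℕ} (w : Fin m → Fin m → ℝ) (c : Fin m → ℝ) (lam σ : ℝ)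

private noncomputable def bfn (α : Fin m → Fin m → ℝ) (v : Fin m → ℝ) (i : Fin m) : ℝ :=
  c i + (lam / 2) * (∑ j, w i j * (α i j - α j i)) + σ * v i

private noncomputable def dvl (α : Fin m → Fin m → ℝ) (v : Fin m → ℝ) : ℝ :=
  -(1 / 2) * ∑ i, (max (-c i - (lam / 2) * (∑ j, w i j * (α i j - α j i)) - σ * v i) 0) ^ 2

private lemma dvl_eq (α : Fin m → Fin m → ℝ) (v : Fin m → ℝ) :
    dvl w c lam σ α v = ∑ i, (-(1 / 2) * (max (-(bfn w c lam σ α v i)) 0) ^ 2) := by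
  unfold dvl bfn
  rw [Finset.mul_sum]
  refine Finset.sum_congr rfl fun i _ => ?_
  have h : -c i - (lam / 2) * (∑ j, w i j * (α i j - α j i)) - σ * v i
      = -(c i + (lam / 2) * (∑ j, w i j * (α i j - α j i)) + σ * v i) := by ring
  rw [h]

private lemma expand_sum (α : Fin m → Fin m → ℝ) (v : Fin m → ℝ) (u : Fin m → ℝ) :
    ∑ i, ((1 / 2) * u i ^ 2 + u i * bfn w c lam σ α v i)
      = (1 / 2) * (∑ i, u i ^ 2) + (∑ i, u i * c i) + σ * (∑ i, v i * u i)
        + (lam / 2) * (∑ i, (∑ j, w i j * (α i j - α j i)) * u i) := by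
  rw [Finset.mul_sum, Finset.mul_sum, Finset.mul_sum, ← Finset.sum_add_distrib,
    ← Finset.sum_add_distrib, ← Finset.sum_add_distrib]
  refine Finset.sum_congr rfl fun i _ => ?_
  unfold bfn; ring

private lemma Kclosed : IsClosed ({p | (∀ i j, p.1 i j = -p.1 j i) ∧ (∀ i j, |p.1 i j| ≤ 1)
      ∧ (∀ i, 0 ≤ p.2 i) ∧ ∑ i, p.2 i = 1} : Set ((Fin m → Fin m → ℝ) × (Fin m → ℝ))) := by
  have hc1 : ∀ i j : Fin m, Continuous fun p : (Fin m → Fin m → ℝ) × (Fin m → ℝ) =>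
      p.1 i j := fun i j => (continuous_apply j).comp ((continuous_apply i).comp continuous_fst)
  have hc2 : ∀ i : Fin m, Continuous fun p : (Fin m → Fin m → ℝ) × (Fin m → ℝ) =>
      p.2 i := fun i => (continuous_apply i).comp continuous_snd
  have h1 : ({p | (∀ i j, p.1 i j = -p.1 j i) ∧ (∀ i j, |p.1 i j| ≤ 1) ∧ (∀ i, 0 ≤ p.2 i)
      ∧ ∑ i, p.2 i = 1} : Set ((Fin m → Fin m → ℝ) × (Fin m → ℝ)))
      = (⋂ i, ⋂ j, {p : (Fin m → Fin m → ℝ) × (Fin m → ℝ) | p.1 i j = -p.1 j i})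
        ∩ ((⋂ i, ⋂ j, {p : (Fin m → Fin m → ℝ) × (Fin m → ℝ) | |p.1 i j| ≤ 1})
        ∩ ((⋂ i, {p : (Fin m → Fin m → ℝ) × (Fin m → ℝ) | 0 ≤ p.2 i})
        ∩ {p : (Fin m → Fin m → ℝ) × (Fin m → ℝ) | ∑ i, p.2 i = 1})) := by
    ext p
    simp only [Set.mem_setOf_eq, Set.mem_inter_iff, Set.mem_iInter]
  rw [h1]
  refine IsClosed.inter ?_ (IsClosed.inter ?_ (IsClosed.inter ?_ ?_))
  · exact isClosed_iInter fun i => isClosed_iInter fun j =>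
      isClosed_eq (hc1 i j) ((hc1 j i).neg)
  · exact isClosed_iInter fun i => isClosed_iInter fun j =>
      isClosed_le (hc1 i j).abs continuous_const
  · exact isClosed_iInter fun i => isClosed_le continuous_const (hc2 i)
  · exact isClosed_eq (continuous_finset_sum _ fun i _ => hc2 i) continuous_const

private lemma Ksub : ({p | (∀ i j, p.1 i j = -p.1 j i) ∧ (∀ i j, |p.1 i j| ≤ 1)
      ∧ (∀ i, 0 ≤ p.2 i) ∧ ∑ i, p.2 i = 1} : Set ((Fin m → Fin m → ℝ) × (Fin m → ℝ)))
      ⊆ Metric.closedBall 0 1 := by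
  rintro ⟨α, v⟩ ⟨h1, h2, h3, h4⟩
  rw [Metric.mem_closedBall, dist_zero_right, Prod.norm_def]
  refine max_le ?_ ?_
  · rw [pi_norm_le_iff_of_nonneg zero_le_one]
    intro i
    rw [pi_norm_le_iff_of_nonneg zero_le_one]
    intro j
    rw [Real.norm_eq_abs]
    exact h2 i j
  · rw [pi_norm_le_iff_of_nonneg zero_le_one]
    intro i
    rw [Real.norm_eq_abs, abs_le]
    constructor
    · linarith [h3 i]
    · calc v i ≤ ∑ k, v k := Finset.single_le_sum (fun k _ => h3 k) (Finset.mem_univ i)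
        _ = 1 := h4

private lemma dvl_cont :
    Continuous fun p : (Fin m → Fin m → ℝ) × (Fin m → ℝ) => dvl w c lam σ p.1 p.2 := by
  unfold dvl
  refine continuous_const.mul (continuous_finset_sum _ fun i _ => ?_)
  refine Continuous.pow (Continuous.max ?_ continuous_const) 2
  refine Continuous.sub (Continuous.sub continuous_const ?_) ?_
  · exact continuous_const.mul (continuous_finset_sum _ fun j _ =>
      continuous_const.mul (Continuous.sub
        (f := fun p : (Fin m → Fin m → ℝ) × (Fin m → ℝ) => p.1 i j)
        (g := fun p : (Fin m → Fin m → ℝ) × (Fin m → ℝ) => p.1 j i) ((continuous_apply j).comp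
        ((continuous_apply i).comp continuous_fst))
        ((continuous_apply i).comp ((continuous_apply j).comp continuous_fst))))
  · exact continuous_const.mul ((continuous_apply i).comp continuous_snd)

private lemma exists_dual_max (hm : 1 ≤ m) :
    ∃ (α : Fin m → Fin m → ℝ) (v : Fin m → ℝ),
      (∀ i j, α i j = -α j i) ∧ (∀ i j, |α i j| ≤ 1) ∧ (∀ i, 0 ≤ v i) ∧ (∑ i, v i) = 1 ∧
      ∀ (β : Fin m → Fin m → ℝ) (z : Fin m → ℝ),
        (∀ i j, β i j = -β j i) → (∀ i j, |β i j| ≤ 1) → (∀ i, 0 ≤ z i) → (∑ i, z i) = 1 →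
        dvl w c lam σ β z ≤ dvl w c lam σ α v := by
  classical
  have hne : ({p | (∀ i j, p.1 i j = -p.1 j i) ∧ (∀ i j, |p.1 i j| ≤ 1) ∧ (∀ i, 0 ≤ p.2 i)
      ∧ ∑ i, p.2 i = 1} : Set ((Fin m → Fin m → ℝ) × (Fin m → ℝ))).Nonempty := by
    refine ⟨⟨fun _ _ => 0, fun i => if i = (⟨0, hm⟩ : Fin m) then 1 else 0⟩, ?_, ?_, ?_, ?_⟩
    · intro i j; simp
    · intro i j; simp
    · intro i; dsimp only; split <;> norm_num
    · simp
  have hcpt : IsCompact ({p | (∀ i j, p.1 i j = -p.1 j i) ∧ (∀ i j, |p.1 i j| ≤ 1)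
      ∧ (∀ i, 0 ≤ p.2 i) ∧ ∑ i, p.2 i = 1} : Set ((Fin m → Fin m → ℝ) × (Fin m → ℝ))) :=
    (isCompact_closedBall 0 1).of_isClosed_subset Kclosed Ksub
  obtain ⟨p, hpK, hmax⟩ := hcpt.exists_isMaxOn hne (dvl_cont w c lam σ).continuousOn
  rw [isMaxOn_iff] at hmax
  obtain ⟨hp1, hp2, hp3, hp4⟩ := hpK
  refine ⟨p.1, p.2, hp1, hp2, hp3, hp4, ?_⟩
  intro β z hb1 hb2 hb3 hb4
  exact hmax (β, z) ⟨hb1, hb2, hb3, hb4⟩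

end RatioAux
section RatioOpt

variable {m : ℕ} (w : Fin m → Fin m → ℝ) (c : Fin m → ℝ) (lam σ : ℝ)

private lemma opt_ineq (α : Fin m → Fin m → ℝ) (v : Fin m → ℝ)
    (hα1 : ∀ i j, α i j = -α j i) (hα2 : ∀ i j, |α i j| ≤ 1)
    (hv1 : ∀ i, 0 ≤ v i) (hv2 : (∑ i, v i) = 1)
    (hmax : ∀ (β : Fin m → Fin m → ℝ) (z : Fin m → ℝ),
        (∀ i j, β i j = -β j i) → (∀ i j, |β i j| ≤ 1) → (∀ i, 0 ≤ z i) → (∑ i, z i) = 1 →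
        dvl w c lam σ β z ≤ dvl w c lam σ α v)
    (β : Fin m → Fin m → ℝ) (z : Fin m → ℝ)
    (hβ1 : ∀ i j, β i j = -β j i) (hβ2 : ∀ i j, |β i j| ≤ 1)
    (hz1 : ∀ i, 0 ≤ z i) (hz2 : (∑ i, z i) = 1) :
    ∑ i, (max (-(bfn w c lam σ α v i)) 0) * (bfn w c lam σ β z i - bfn w c lam σ α v i) ≤ 0 := by
  set S := ∑ i, (max (-(bfn w c lam σ α v i)) 0)
      * (bfn w c lam σ β z i - bfn w c lam σ α v i) with hS
  set C := ∑ i, (bfn w c lam σ β z i - bfn w c lam σ α v i) ^ 2 with hC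
  have hstep : ∀ t : ℝ, 0 < t → t ≤ 1 → t * S ≤ t ^ 2 / 2 * C := by
    intro t ht ht1
    set βt : Fin m → Fin m → ℝ := fun i j => (1 - t) * α i j + t * β i j with hβt
    set zt : Fin m → ℝ := fun i => (1 - t) * v i + t * z i with hzt
    have f1 : ∀ i j, βt i j = -βt j i := by
      intro i j; simp only [hβt]; rw [hα1 i j, hβ1 i j]; ring
    have f2 : ∀ i j, |βt i j| ≤ 1 := by
      intro i j
      simp only [hβt]
      calc |(1 - t) * α i j + t * β i j| ≤ |(1 - t) * α i j| + |t * β i j| := abs_add_le _ _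
        _ = (1 - t) * |α i j| + t * |β i j| := by
            rw [abs_mul, abs_mul, abs_of_nonneg (show (0:ℝ) ≤ 1 - t by linarith),
              abs_of_nonneg ht.le]
        _ ≤ (1 - t) * 1 + t * 1 := add_le_add
            (mul_le_mul_of_nonneg_left (hα2 i j) (by linarith))
            (mul_le_mul_of_nonneg_left (hβ2 i j) ht.le)
        _ = 1 := by ring
    have f3 : ∀ i, 0 ≤ zt i := fun i =>
      add_nonneg (mul_nonneg (by linarith) (hv1 i)) (mul_nonneg ht.le (hz1 i))
    have f4 : ∑ i, zt i = 1 := by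
      simp only [hzt]
      rw [Finset.sum_add_distrib, ← Finset.mul_sum, ← Finset.mul_sum, hv2, hz2]; ring
    have hbt : ∀ i, bfn w c lam σ βt zt i
        = bfn w c lam σ α v i + t * (bfn w c lam σ β z i - bfn w c lam σ α v i) := by
      intro i
      have hsum : ∑ j, w i j * (βt i j - βt j i)
          = (1 - t) * (∑ j, w i j * (α i j - α j i))
            + t * (∑ j, w i j * (β i j - β j i)) := by
        rw [Finset.mul_sum, Finset.mul_sum, ← Finset.sum_add_distrib]
        refine Finset.sum_congr rfl fun j _ => ?_
        simp only [hβt]; ring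
      unfold bfn
      rw [hsum]
      simp only [hzt]
      ring
    have hle := hmax βt zt f1 f2 f3 f4
    have hlow : dvl w c lam σ α v + (t * S - t ^ 2 / 2 * C) ≤ dvl w c lam σ βt zt := by
      rw [dvl_eq, dvl_eq]
      have a1 : ∑ i, (max (-(bfn w c lam σ α v i)) 0)
          * (t * (bfn w c lam σ β z i - bfn w c lam σ α v i)) = t * S := by
        rw [hS, Finset.mul_sum]
        exact Finset.sum_congr rfl fun i _ => by ring
      have a2 : ∑ i, (t * (bfn w c lam σ β z i - bfn w c lam σ α v i)) ^ 2 / 2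
          = t ^ 2 / 2 * C := by
        rw [hC, Finset.mul_sum]
        exact Finset.sum_congr rfl fun i _ => by ring
      have hsum2 : ∑ i, (-(1 / 2) * (max (-(bfn w c lam σ α v i)) 0) ^ 2
            + (max (-(bfn w c lam σ α v i)) 0)
              * (t * (bfn w c lam σ β z i - bfn w c lam σ α v i))
            - (t * (bfn w c lam σ β z i - bfn w c lam σ α v i)) ^ 2 / 2)
          = (∑ i, -(1 / 2) * (max (-(bfn w c lam σ α v i)) 0) ^ 2)
            + (t * S - t ^ 2 / 2 * C) := by
        rw [Finset.sum_sub_distrib, Finset.sum_add_distrib, a1, a2]; ring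
      calc (∑ i, -(1 / 2) * (max (-(bfn w c lam σ α v i)) 0) ^ 2) + (t * S - t ^ 2 / 2 * C)
          = ∑ i, (-(1 / 2) * (max (-(bfn w c lam σ α v i)) 0) ^ 2
              + (max (-(bfn w c lam σ α v i)) 0)
                * (t * (bfn w c lam σ β z i - bfn w c lam σ α v i))
              - (t * (bfn w c lam σ β z i - bfn w c lam σ α v i)) ^ 2 / 2) := hsum2.symm
        _ ≤ ∑ i, -(1 / 2) * (max (-(bfn w c lam σ βt zt i)) 0) ^ 2 := by
            refine Finset.sum_le_sum fun i _ => ?_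
            rw [hbt i]
            exact smooth_aux _ _
    linarith
  have hC0 : 0 ≤ C := Finset.sum_nonneg fun i _ => sq_nonneg _
  by_contra hcon
  push_neg at hcon
  rcases eq_or_lt_of_le hC0 with hC1 | hC1
  · have := hstep 1 one_pos le_rfl
    nlinarith
  · have ht : 0 < min 1 (S / C) := lt_min one_pos (div_pos hcon hC1)
    have h1 := hstep _ ht (min_le_left _ _)
    have h3 : min 1 (S / C) * C ≤ S := (le_div_iff₀ hC1).mp (min_le_right _ _)
    nlinarith [mul_le_mul_of_nonneg_left h3 ht.le, mul_pos ht hcon]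

end RatioOpt

private noncomputable def sgn (x : ℝ) : ℝ := if x < 0 then -1 else if 0 < x then 1 else 0

private lemma sgn_anti (a b : ℝ) : sgn (a - b) = -sgn (b - a) := by
  unfold sgn
  rcases lt_trichotomy a b with h | h | h
  · rw [if_pos (by linarith : a - b < 0), if_neg (by linarith : ¬ b - a < 0),
      if_pos (by linarith : 0 < b - a)]
  · subst h; norm_num
  · rw [if_neg (by linarith : ¬ a - b < 0), if_pos (by linarith : 0 < a - b),
      if_pos (by linarith : b - a < 0)]
    norm_num

private lemma sgn_abs_le (x : ℝ) : |sgn x| ≤ 1 := by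
  unfold sgn; split_ifs <;> norm_num

private lemma sgn_mul (x : ℝ) : sgn x * x = |x| := by
  unfold sgn
  rcases lt_trichotomy x 0 with h | h | h
  · rw [if_pos h, abs_of_neg h]; ring
  · subst h; norm_num
  · rw [if_neg (by linarith), if_pos h, abs_of_pos h]; ring

section RatioMore

variable {m : ℕ} (w : Fin m → Fin m → ℝ) (c : Fin m → ℝ) (lam σ : ℝ)

private lemma abs_bound (hw_nonneg : ∀ i j, 0 ≤ w i j) (hw_symm : ∀ i j, w i j = w j i)
    (β : Fin m → Fin m → ℝ) (hb1 : ∀ i j, β i j = -β j i) (hb2 : ∀ i j, |β i j| ≤ 1)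
    (y : Fin m → ℝ) :
    ∑ i, (∑ j, w i j * (β i j - β j i)) * y i ≤ ∑ i, ∑ j, w i j * |y i - y j| := by
  rw [rearrange w hw_symm β hb1 y]
  refine Finset.sum_le_sum fun i _ => Finset.sum_le_sum fun j _ => ?_
  rw [mul_assoc]
  refine mul_le_mul_of_nonneg_left ?_ (hw_nonneg i j)
  calc β i j * (y i - y j) ≤ |β i j * (y i - y j)| := le_abs_self _
    _ = |β i j| * |y i - y j| := abs_mul _ _
    _ ≤ 1 * |y i - y j| := mul_le_mul_of_nonneg_right (hb2 i j) (abs_nonneg _)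
    _ = |y i - y j| := one_mul _

private lemma simplex_le (hm : 1 ≤ m) (z y : Fin m → ℝ)
    (hz1 : ∀ i, 0 ≤ z i) (hz2 : ∑ i, z i = 1) :
    ∑ i, z i * y i ≤ Finset.univ.sup' ⟨⟨0, hm⟩, Finset.mem_univ _⟩ y := by
  calc ∑ i, z i * y i
      ≤ ∑ i, z i * (Finset.univ.sup' ⟨⟨0, hm⟩, Finset.mem_univ _⟩ y) :=
        Finset.sum_le_sum fun i _ =>
          mul_le_mul_of_nonneg_left (Finset.le_sup' y (Finset.mem_univ i)) (hz1 i)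
    _ = _ := by rw [← Finset.sum_mul, hz2, one_mul]

end RatioMore

/-- **Strong duality for the inner convex problem of RatioDCA.** The minimum over `u ≥ 0` of
`(1/2)‖u‖² + ⟨u,c⟩ + σ·max_i u_i + (λ/2)·∑_{i,j} w(i,j)·|u_i − u_j|` equals the maximum over
antisymmetric `α` with `‖α‖_∞ ≤ 1` and `v` in the simplex of
`−(1/2)·‖P₊(−c − (λ/2)·Aα − σ·v)‖²`, where `(Aα)_i = ∑_j w(i,j)(α(i,j) − α(j,i))` and
`P₊` is the componentwise positive part. -/
theorem ratioDCA_inner_strong_duality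
    (m : ℕ) (hm : 1 ≤ m)
    (w : Fin m → Fin m → ℝ) (hw_symm : ∀ i j, w i j = w j i) (hw_nonneg : ∀ i j, 0 ≤ w i j)
    (c : Fin m → ℝ) (lam : ℝ) (hlam : 0 ≤ lam) (σ : ℝ) (hσ : 0 ≤ σ) :
    sInf {x : ℝ | ∃ u : Fin m → ℝ, (∀ i, 0 ≤ u i) ∧
        x = (1 / 2) * (∑ i, (u i) ^ 2) + (∑ i, u i * c i)
          + σ * (Finset.univ.sup' ⟨⟨0, hm⟩, Finset.mem_univ _⟩ u)
          + (lam / 2) * ∑ i, ∑ j, w i j * |u i - u j|}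
      = sSup {x : ℝ | ∃ α : Fin m → Fin m → ℝ, ∃ v : Fin m → ℝ,
          (∀ i j, α i j = -α j i) ∧ (∀ i j, |α i j| ≤ 1)
          ∧ (∀ i, 0 ≤ v i) ∧ (∑ i, v i) = 1
          ∧ x = -(1 / 2) * ∑ i,
              (max (-c i - (lam / 2) * (∑ j, w i j * (α i j - α j i)) - σ * v i) 0) ^ 2} := by
  classical
  obtain ⟨α, v, hα1, hα2, hv1, hv2, hmax⟩ := exists_dual_max w c lam σ hm
  set u : Fin m → ℝ := fun i => max (-(bfn w c lam σ α v i)) 0 with hu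
  have hu0 : ∀ i, 0 ≤ u i := fun i => le_max_right _ _
  -- weak duality
  have weak : ∀ (β : Fin m → Fin m → ℝ) (z : Fin m → ℝ) (y : Fin m → ℝ),
      (∀ i j, β i j = -β j i) → (∀ i j, |β i j| ≤ 1) → (∀ i, 0 ≤ z i) → (∑ i, z i) = 1 →
      (∀ i, 0 ≤ y i) →
      dvl w c lam σ β z ≤ (1 / 2) * (∑ i, (y i) ^ 2) + (∑ i, y i * c i)
        + σ * (Finset.univ.sup' ⟨⟨0, hm⟩, Finset.mem_univ _⟩ y)
        + (lam / 2) * ∑ i, ∑ j, w i j * |y i - y j| := by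
    intro β z y hb1 hb2 hz1 hz2 hy
    have h1 : dvl w c lam σ β z ≤ ∑ i, ((1 / 2) * y i ^ 2 + y i * bfn w c lam σ β z i) := by
      rw [dvl_eq]
      exact Finset.sum_le_sum fun i _ => weak_aux (y i) _ (hy i)
    rw [expand_sum] at h1
    have h2' := mul_le_mul_of_nonneg_left (simplex_le hm z y hz1 hz2) hσ
    have h3' := mul_le_mul_of_nonneg_left (abs_bound w hw_nonneg hw_symm β hb1 hb2 y)
      (show (0:ℝ) ≤ lam / 2 by linarith)
    linarith
  -- argmax index
  obtain ⟨i0, _, hi0⟩ := Finset.exists_mem_eq_sup'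
      (⟨⟨0, hm⟩, Finset.mem_univ _⟩ : (Finset.univ : Finset (Fin m)).Nonempty) u
  set β0 : Fin m → Fin m → ℝ := fun i j => sgn (u i - u j) with hβ0
  set z0 : Fin m → ℝ := fun i => if i = i0 then 1 else 0 with hz0
  have hb1 : ∀ i j, β0 i j = -β0 j i := fun i j => sgn_anti _ _
  have hb2 : ∀ i j, |β0 i j| ≤ 1 := fun i j => sgn_abs_le _
  have hz1 : ∀ i, 0 ≤ z0 i := by intro i; simp only [hz0]; split <;> norm_num
  have hz2 : ∑ i, z0 i = 1 := by simp [hz0]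
  have hvar := opt_ineq w c lam σ α v hα1 hα2 hv1 hv2 hmax β0 z0 hb1 hb2 hz1 hz2
  have hvar' : ∑ i, u i * (bfn w c lam σ β0 z0 i - bfn w c lam σ α v i) ≤ 0 := by
    simpa only [hu] using hvar
  -- split the sum
  have hsplit : ∑ i, u i * (bfn w c lam σ β0 z0 i - bfn w c lam σ α v i)
      = ((lam / 2) * (∑ i, (∑ j, w i j * (β0 i j - β0 j i)) * u i)
          - (lam / 2) * (∑ i, (∑ j, w i j * (α i j - α j i)) * u i))
        + (σ * (∑ i, z0 i * u i) - σ * (∑ i, v i * u i)) := by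
    have e : ∀ i, u i * (bfn w c lam σ β0 z0 i - bfn w c lam σ α v i)
        = ((lam / 2) * ((∑ j, w i j * (β0 i j - β0 j i)) * u i)
            - (lam / 2) * ((∑ j, w i j * (α i j - α j i)) * u i))
          + (σ * (z0 i * u i) - σ * (v i * u i)) := by
      intro i; unfold bfn; ring
    calc ∑ i, u i * (bfn w c lam σ β0 z0 i - bfn w c lam σ α v i)
        = ∑ i, (((lam / 2) * ((∑ j, w i j * (β0 i j - β0 j i)) * u i)
            - (lam / 2) * ((∑ j, w i j * (α i j - α j i)) * u i))
          + (σ * (z0 i * u i) - σ * (v i * u i))) := Finset.sum_congr rfl fun i _ => e i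
      _ = _ := by
          simp only [Finset.sum_add_distrib, Finset.sum_sub_distrib, ← Finset.mul_sum]
  have hsum_z : ∑ i, z0 i * u i = u i0 := by simp [hz0, ite_mul]
  have hsum_β : ∑ i, (∑ j, w i j * (β0 i j - β0 j i)) * u i
      = ∑ i, ∑ j, w i j * |u i - u j| := by
    rw [rearrange w hw_symm β0 hb1 u]
    refine Finset.sum_congr rfl fun i _ => Finset.sum_congr rfl fun j _ => ?_
    rw [mul_assoc]
    simp only [hβ0]
    rw [sgn_mul]
  have habs_le := abs_bound w hw_nonneg hw_symm α hα1 hα2 u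
  have hsimp_le : ∑ i, v i * u i ≤ u i0 := by
    rw [← hi0]; exact simplex_le hm v u hv1 hv2
  -- total equality
  have hEq : σ * (u i0) + (lam / 2) * (∑ i, ∑ j, w i j * |u i - u j|)
      = σ * (∑ i, v i * u i)
        + (lam / 2) * (∑ i, (∑ j, w i j * (α i j - α j i)) * u i) := by
    have l1 := mul_le_mul_of_nonneg_left habs_le (show (0:ℝ) ≤ lam / 2 by linarith)
    have l2 := mul_le_mul_of_nonneg_left hsimp_le hσ
    rw [hsplit, hsum_z, hsum_β] at hvar'
    linarith
  -- value equality
  have hkey : (1 / 2) * (∑ i, (u i) ^ 2) + (∑ i, u i * c i)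
        + σ * (Finset.univ.sup' ⟨⟨0, hm⟩, Finset.mem_univ _⟩ u)
        + (lam / 2) * ∑ i, ∑ j, w i j * |u i - u j|
      = dvl w c lam σ α v := by
    have s1 : ∑ i, ((1 / 2) * u i ^ 2 + u i * bfn w c lam σ α v i)
        = ∑ i, (-(1 / 2) * (max (-(bfn w c lam σ α v i)) 0) ^ 2) := by
      refine Finset.sum_congr rfl fun i _ => ?_
      have h : u i = max (-(bfn w c lam σ α v i)) 0 := by simp only [hu]
      rw [h]
      exact eq_aux _
    have s2 := expand_sum w c lam σ α v u
    rw [hi0, dvl_eq w c lam σ α v, ← s1, s2]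
    linarith
  -- bounds for csInf/csSup
  have hbddP : BddBelow {x : ℝ | ∃ u : Fin m → ℝ, (∀ i, 0 ≤ u i) ∧
      x = (1 / 2) * (∑ i, (u i) ^ 2) + (∑ i, u i * c i)
        + σ * (Finset.univ.sup' ⟨⟨0, hm⟩, Finset.mem_univ _⟩ u)
        + (lam / 2) * ∑ i, ∑ j, w i j * |u i - u j|} := by
    refine ⟨dvl w c lam σ α v, ?_⟩
    rintro p ⟨y, hy, rfl⟩
    exact weak α v y hα1 hα2 hv1 hv2 hy
  have hbddD : BddAbove {x : ℝ | ∃ α : Fin m → Fin m → ℝ, ∃ v : Fin m → ℝ,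
      (∀ i j, α i j = -α j i) ∧ (∀ i j, |α i j| ≤ 1)
      ∧ (∀ i, 0 ≤ v i) ∧ (∑ i, v i) = 1
      ∧ x = -(1 / 2) * ∑ i,
          (max (-c i - (lam / 2) * (∑ j, w i j * (α i j - α j i)) - σ * v i) 0) ^ 2} := by
    refine ⟨0, ?_⟩
    rintro d ⟨β, z, _, _, _, _, rfl⟩
    have h0 : 0 ≤ ∑ i, (max (-c i - (lam / 2) * (∑ j, w i j * (β i j - β j i)) - σ * z i) 0) ^ 2 :=
      Finset.sum_nonneg fun i _ => sq_nonneg _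
    linarith
  have hDmem : dvl w c lam σ α v ∈ {x : ℝ | ∃ α : Fin m → Fin m → ℝ, ∃ v : Fin m → ℝ,
      (∀ i j, α i j = -α j i) ∧ (∀ i j, |α i j| ≤ 1)
      ∧ (∀ i, 0 ≤ v i) ∧ (∑ i, v i) = 1
      ∧ x = -(1 / 2) * ∑ i,
          (max (-c i - (lam / 2) * (∑ j, w i j * (α i j - α j i)) - σ * v i) 0) ^ 2} :=
    ⟨α, v, hα1, hα2, hv1, hv2, rfl⟩
  have hPmem : ((1 / 2) * (∑ i, (u i) ^ 2) + (∑ i, u i * c i)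
        + σ * (Finset.univ.sup' ⟨⟨0, hm⟩, Finset.mem_univ _⟩ u)
        + (lam / 2) * ∑ i, ∑ j, w i j * |u i - u j|)
      ∈ {x : ℝ | ∃ u : Fin m → ℝ, (∀ i, 0 ≤ u i) ∧
        x = (1 / 2) * (∑ i, (u i) ^ 2) + (∑ i, u i * c i)
          + σ * (Finset.univ.sup' ⟨⟨0, hm⟩, Finset.mem_univ _⟩ u)
          + (lam / 2) * ∑ i, ∑ j, w i j * |u i - u j|} := ⟨u, hu0, rfl⟩
  apply le_antisymm
  · refine le_trans (csInf_le hbddP hPmem) ?_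
    rw [hkey]
    exact le_csSup hbddD hDmem
  · refine csSup_le ⟨dvl w c lam σ α v, hDmem⟩ ?_
    rintro d ⟨β, z, hb1', hb2', hz1', hz2', rfl⟩
    refine le_csInf ⟨_, (fun _ => (0:ℝ)), fun i => le_rfl, rfl⟩ ?_
    rintro p ⟨y, hy, rfl⟩
    exact weak β z y hb1' hb2' hz1' hz2' hy
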